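/- Let h be a nonzero polynomial in ℤ[t] and let a ≥ 1 be an integer. Then δ(h·(1 + t + ⋯ + t^{a−1})) = a·δ(h). -/

import Mathlib

open Polynomial

/-- `δ(p) = ∑_{i=0}^{s} (2i - s) p_i` where `s = deg p`. -/
noncomputable def polyDelta (p : Polynomial ℤ) : ℤ :=
  ∑ i ∈ Finset.range (p.natDegree + 1), (2 * (i : ℤ) - (p.natDegree : ℤ)) * p.coeff i

lemma deriv_eval_one (p : Polynomial ℤ) :
    p.derivative.eval 1 = ∑ i ∈ Finset.range (p.natDegree + 1), (i : ℤ) * p.coeff i := by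
  rw [Polynomial.eval_eq_sum_range'
    (Nat.lt_succ_of_le ((Polynomial.natDegree_derivative_le p).trans (Nat.sub_le _ _)))]
  rw [Finset.sum_range_succ' (fun i => (i : ℤ) * p.coeff i)]
  simp only [Polynomial.coeff_derivative, one_pow, mul_one, Nat.cast_zero, zero_mul, add_zero]
  rw [Finset.sum_range_succ, Polynomial.coeff_natDegree_succ_eq_zero]
  push_cast
  ring_nf
  simp [mul_comm]
  exact Finset.sum_congr rfl fun _ _ => add_comm _ _

lemma polyDelta_eq (p : Polynomial ℤ) :
    polyDelta p = 2 * p.derivative.eval 1 - (p.natDegree : ℤ) * p.eval 1 := by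
  rw [deriv_eval_one, Polynomial.eval_eq_sum_range, polyDelta, Finset.mul_sum, Finset.mul_sum,
    ← Finset.sum_sub_distrib]
  apply Finset.sum_congr rfl
  intro i _
  simp only [one_pow, mul_one]
  ring

lemma geo_natDegree (a : ℕ) (ha : 1 ≤ a) :
    (∑ i ∈ Finset.range a, (X : Polynomial ℤ) ^ i).natDegree = a - 1 := by
  obtain ⟨n, rfl⟩ := Nat.exists_eq_add_of_le ha
  induction n with
  | zero => simp
  | succ n ih =>
    rw [show 1 + (n + 1) = (1 + n) + 1 by ring, Finset.sum_range_succ]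
    rw [Polynomial.natDegree_add_eq_right_of_natDegree_lt]
    · simp [Polynomial.natDegree_X_pow]
    · rw [ih (by omega), Polynomial.natDegree_X_pow]; omega

theorem delta_mul_geom (h : Polynomial ℤ) (hh : h ≠ 0) (a : ℕ) (ha : 1 ≤ a) :
    polyDelta (h * ∑ i ∈ Finset.range a, (X : Polynomial ℤ) ^ i) = (a : ℤ) * polyDelta h := by
  set g : Polynomial ℤ := ∑ i ∈ Finset.range a, (X : Polynomial ℤ) ^ i with hg
  have hgne : g ≠ 0 := (Polynomial.monic_geom_sum_X (by omega)).ne_zero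
  have hdeg : (h * g).natDegree = h.natDegree + (a - 1) := by
    rw [Polynomial.natDegree_mul hh hgne, geo_natDegree a ha]
  have hEg : g.eval 1 = (a : ℤ) := by simp [hg]
  have hDg : g.derivative.eval 1 = ∑ i ∈ Finset.range a, (i : ℤ) := by
    simp [hg, Polynomial.derivative_sum, Polynomial.derivative_X_pow,
      Polynomial.eval_finset_sum]
  have hgauss : 2 * g.derivative.eval 1 = (a : ℤ) * ((a : ℤ) - 1) := by
    rw [hDg]
    have h1 : (∑ i ∈ Finset.range a, i) * 2 = a * (a - 1) := Finset.sum_range_id_mul_two a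
    zify [ha] at h1
    linarith
  rw [polyDelta_eq, polyDelta_eq, hdeg, Polynomial.derivative_mul, Polynomial.eval_add,
    Polynomial.eval_mul, Polynomial.eval_mul, Polynomial.eval_mul, hEg]
  push_cast [Nat.cast_sub ha]
  linear_combination (h.eval 1) * hgauss
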